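/- Given complex numbers a_i^{(r)} for 1 ≤ i ≤ n and 1 ≤ r ≤ p_i − p_{i−1} (where 0 = p_0 ≤ p_1 ≤ ⋯ ≤ p_n are integers), there exist complex numbers a_{i,j} for 1 ≤ i ≤ n and 1 ≤ j ≤ p_i such that a_{i, p_i − p_{i−1} + r} = a_{i−1, r} for all 1 ≤ r ≤ p_{i−1}, and the r-th elementary symmetric polynomial e_r(a_{i,1}, …, a_{i,p_i}) equals a_i^{(r)} for all 1 ≤ r ≤ p_i − p_{i−1}. -/

import Mathlib

/-- The `r`-th elementary symmetric polynomial of the values `f 1, …, f m`. -/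
noncomputable def esym (r m : ℕ) (f : ℕ → ℂ) : ℂ :=
  ∑ s ∈ Finset.powersetCard r (Finset.Icc 1 m), ∏ j ∈ s, f j

open Polynomial


lemma exists_monic_coeff (P : Polynomial ℂ) (hP : P.Monic) (d : ℕ) (hd : P.natDegree = d) :
    ∀ (k : ℕ) (t : ℕ → ℂ), ∃ Q : Polynomial ℂ, Q.Monic ∧ Q.natDegree = k ∧
      ∀ j < k, (Q * P).coeff (d + j) = t j := by
  intro k
  induction k with
  | zero => intro t; exact ⟨1, monic_one, natDegree_one, by omega⟩
  | succ k ih =>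
    intro t
    obtain ⟨Q', hQ'm, hQ'd, hQ'⟩ := ih (fun j => t (j + 1))
    set v := (X * Q' * P).coeff d with hv
    have hXQ : (X * Q').Monic := monic_X.mul hQ'm
    have hXQd : (X * Q').natDegree = k + 1 := by
      rw [natDegree_mul X_ne_zero hQ'm.ne_zero, natDegree_X, hQ'd]; omega
    have hdeg : (C (t 0 - v)).degree < (X * Q').degree := by
      apply lt_of_le_of_lt degree_C_le
      rw [degree_eq_natDegree hXQ.ne_zero, hXQd]
      exact_mod_cast Nat.succ_pos k
    refine ⟨X * Q' + C (t 0 - v), hXQ.add_of_left hdeg, ?_, ?_⟩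
    · rw [natDegree_add_C, hXQd]
    · intro j hj
      rw [add_mul, coeff_add]
      rcases Nat.eq_zero_or_pos j with rfl | hj1
      · have h2 : (C (t 0 - v) * P).coeff (d + 0) = t 0 - v := by
          rw [coeff_C_mul, add_zero, ← hd, hP.coeff_natDegree, mul_one]
        rw [h2, add_zero, ← hv]; ring
      · have h1 : (X * Q' * P).coeff (d + j) = t j := by
          have he : d + j = (d + (j - 1)) + 1 := by omega
          rw [mul_assoc, he, coeff_X_mul, hQ' (j - 1) (by omega)]
          congr 1; omega
        have h2 : (C (t 0 - v) * P).coeff (d + j) = 0 := by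
          rw [coeff_C_mul, coeff_eq_zero_of_natDegree_lt (by omega), mul_zero]
        rw [h1, h2, add_zero]

lemma exists_fun_of_multiset : ∀ (k : ℕ) (s : Multiset ℂ), Multiset.card s = k →
    ∃ c : ℕ → ℂ, (Finset.Icc 1 k).val.map c = s := by
  intro k
  induction k with
  | zero =>
    intro s hs
    refine ⟨fun _ => 0, ?_⟩
    rw [Multiset.card_eq_zero.mp hs]
    simp
  | succ k ih =>
    intro s hs
    obtain ⟨x, hx⟩ := Multiset.card_pos_iff_exists_mem.mp (show 0 < Multiset.card s by rw [hs]; omega)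
    obtain ⟨s', rfl⟩ := Multiset.exists_cons_of_mem hx
    rw [Multiset.card_cons] at hs
    obtain ⟨c', hc'⟩ := ih s' (by omega)
    refine ⟨fun j => if j = k + 1 then x else c' j, ?_⟩
    have hins : Finset.Icc 1 (k + 1) = insert (k + 1) (Finset.Icc 1 k) := by
      ext j; simp only [Finset.mem_Icc, Finset.mem_insert]; omega
    have hnm : (k + 1) ∉ Finset.Icc 1 k := by simp
    rw [hins, Finset.insert_val_of_notMem hnm, Multiset.map_cons, if_pos rfl]
    congr 1
    rw [← hc']
    apply Multiset.map_congr rfl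
    intro j hj
    have : j ≤ k := (Finset.mem_Icc.mp hj).2
    rw [if_neg (by omega)]

lemma esym_eq_coeff (m r : ℕ) (hr : r ≤ m) (f : ℕ → ℂ) :
    esym r m f = (∏ j ∈ Finset.Icc 1 m, (X + C (f j))).coeff (m - r) := by
  have hcard : (Finset.Icc 1 m).card = m := by rw [Nat.card_Icc]; omega
  rw [Finset.prod_X_add_C_coeff _ f (show m - r ≤ (Finset.Icc 1 m).card by rw [hcard]; omega),
    hcard, Nat.sub_sub_self hr, esym]

lemma core (k pn : ℕ) (g t : ℕ → ℂ) :
    ∃ c : ℕ → ℂ, (∀ r, 1 ≤ r → r ≤ pn → c (k + r) = g r) ∧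
      (∀ r, 1 ≤ r → r ≤ k → esym r (k + pn) c = t r) := by
  set P : Polynomial ℂ := ∏ j ∈ Finset.Icc 1 pn, (X + C (g j)) with hPdef
  have hPm : P.Monic := monic_prod_of_monic _ _ fun j _ => monic_X_add_C _
  have hPd : P.natDegree = pn := by
    rw [hPdef, natDegree_prod _ _ fun j _ => (monic_X_add_C _).ne_zero]
    simp [Nat.card_Icc]
  obtain ⟨Q, hQm, hQd, hQ⟩ := exists_monic_coeff P hPm pn hPd k (fun j => t (k - j))
  have hsplit : Q = (Q.roots.map fun z => X - C z).prod :=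
    (IsAlgClosed.splits Q).eq_prod_roots_of_monic hQm
  have hcard : Multiset.card (Q.roots.map fun z => -z) = k := by
    rw [Multiset.card_map, (splits_iff_card_roots).mp (IsAlgClosed.splits Q), hQd]
  obtain ⟨c0, hc0⟩ := exists_fun_of_multiset k _ hcard
  have hQprod : ∏ j ∈ Finset.Icc 1 k, (X + C (c0 j)) = Q := by
    calc ∏ j ∈ Finset.Icc 1 k, (X + C (c0 j))
        = (((Finset.Icc 1 k).val.map c0).map fun z => X + C z).prod := by
          rw [Multiset.map_map, Finset.prod_eq_multiset_prod]; rfl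
      _ = ((Q.roots.map fun z => -z).map fun z => X + C z).prod := by rw [hc0]
      _ = (Q.roots.map fun z => X - C z).prod := by
          rw [Multiset.map_map]; congr 1
          exact Multiset.map_congr rfl fun z _ => by simp [sub_eq_add_neg]
      _ = Q := hsplit.symm
  refine ⟨fun j => if j ≤ k then c0 j else g (j - k), ?_, ?_⟩
  · intro r hr1 hr2
    simp only [show ¬(k + r ≤ k) from by omega, if_false]
    congr 1; omega
  · intro r hr1 hr2
    rw [esym_eq_coeff (k + pn) r (by omega)]
    have hsplit2 : (∏ j ∈ Finset.Icc 1 (k + pn),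
        (X + C ((fun j => if j ≤ k then c0 j else g (j - k)) j))) = Q * P := by
      rw [show Finset.Icc 1 (k + pn) = Finset.Ioc 0 (k + pn) from by ext j; simp; omega]
      rw [← Finset.prod_Ioc_consecutive _ (by omega : 0 ≤ k) (by omega : k ≤ k + pn)]
      congr 1
      · rw [← hQprod, show Finset.Ioc 0 k = Finset.Icc 1 k from by ext j; simp; omega]
        apply Finset.prod_congr rfl
        intro j hj
        rw [Finset.mem_Icc] at hj
        simp [hj.2]
      · rw [hPdef, show Finset.Ioc k (k + pn) = (Finset.Ioc 0 pn).map
            (addLeftEmbedding k) from by rw [Finset.map_add_left_Ioc]; simp]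
        rw [Finset.prod_map]
        apply Finset.prod_congr (show Finset.Ioc 0 pn = Finset.Icc 1 pn from by
          ext j; simp; omega)
        intro j hj
        rw [Finset.mem_Icc] at hj
        simp only [addLeftEmbedding_apply]
        rw [if_neg (by omega : ¬ (k + j ≤ k)), show k + j - k = j from by omega]
    rw [hsplit2]
    rw [show k + pn - r = pn + (k - r) from by omega, hQ (k - r) (by omega)]
    congr 1; omega

/-- Given complex numbers `a i r` for `1 ≤ i ≤ n`, `1 ≤ r ≤ p i - p (i-1)` (where
`0 = p 0 ≤ p 1 ≤ ⋯ ≤ p n`), there exist complex numbers `b i j` for `1 ≤ i ≤ n`,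
`1 ≤ j ≤ p i` such that `b i (p i - p (i-1) + r) = b (i-1) r` for `1 ≤ r ≤ p (i-1)`
and `e_r(b i 1, …, b i (p i)) = a i r` for `1 ≤ r ≤ p i - p (i-1)`. -/
theorem stmt0 (n : ℕ) (p : ℕ → ℕ) (hp0 : p 0 = 0) (hmono : Monotone p)
    (a : ℕ → ℕ → ℂ) :
    ∃ b : ℕ → ℕ → ℂ,
      (∀ i r, 1 ≤ i → i ≤ n → 1 ≤ r → r ≤ p (i - 1) →
        b i (p i - p (i - 1) + r) = b (i - 1) r) ∧
      (∀ i r, 1 ≤ i → i ≤ n → 1 ≤ r → r ≤ p i - p (i - 1) →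
        esym r (p i) (b i) = a i r) := by
  induction n with
  | zero => exact ⟨fun _ _ => 0, fun i r h1 h2 => by omega, fun i r h1 h2 => by omega⟩
  | succ n ih =>
    obtain ⟨b, hb1, hb2⟩ := ih
    obtain ⟨c, hc1, hc2⟩ := core (p (n + 1) - p n) (p n) (b n) (a (n + 1))
    have hpn : p (n + 1) - p n + p n = p (n + 1) :=
      Nat.sub_add_cancel (hmono (Nat.le_succ n))
    refine ⟨Function.update b (n + 1) c, ?_, ?_⟩
    · intro i r hi1 hi2 hr1 hr2
      rcases Nat.lt_or_ge i (n + 1) with hlt | hge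
      · rw [Function.update_of_ne (by omega) c b, Function.update_of_ne (by omega) c b]
        exact hb1 i r hi1 (by omega) hr1 hr2
      · have hieq : i = n + 1 := by omega
        subst hieq
        have h1 : n + 1 - 1 = n := by omega
        rw [h1] at hr2 ⊢
        rw [Function.update_self, Function.update_of_ne (by omega) c b]
        exact hc1 r hr1 hr2
    · intro i r hi1 hi2 hr1 hr2
      rcases Nat.lt_or_ge i (n + 1) with hlt | hge
      · rw [Function.update_of_ne (by omega) c b]
        exact hb2 i r hi1 (by omega) hr1 hr2
      · have hieq : i = n + 1 := by omega
        subst hieq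
        have h1 : n + 1 - 1 = n := by omega
        rw [h1] at hr2
        rw [Function.update_self, ← hpn]
        exact hc2 r hr1 hr2
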